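/- (Bianchi identity for characteristic holonomy so(3); the key algebraic step for the classification by the Stiefel manifold SO(5)/SO(3).) Let a, b, c, d, x ∈ ℝ with d = 3c or d = −4c, and let T := d·φ + a(−2e₁₂₃ + e₁₃₆ − e₁₄₅ + e₂₃₅ + e₂₄₆ + 2e₃₅₆) + b(−2e₁₂₄ − e₁₃₅ − e₁₄₆ + e₂₃₆ − e₂₄₅ + 2e₄₅₆) + c(4e₁₂₇ − 3e₁₃₅ + 3e₁₄₆ + 3e₂₃₆ + 3e₂₄₅ + 4e₃₄₇ + 4e₅₆₇), and let S₁ := e₁₂−e₅₆, S₂ := e₁₃+e₂₄+e₃₅+e₄₆, S₃ := e₁₄−e₂₃+e₃₆−e₄₅. Then the 8×8 matrix σ(T)² + x(2σ(S₁)² + σ(S₂)² + σ(S₃)²) is a scalar multiple of the identity if and only if (d = −4c and x = a² + b² − 49c²) or (d = 3c, a = 0, b = 0 and 2x = −49c²). (This is the Bianchi identity 'T² + R^c is a scalar in the Clifford algebra' for the curvature operator R^c = x(2S₁⊗S₁ + S₂⊗S₂ + S₃⊗S₃), quantized in the Clifford algebra as x(2σ(S₁)σ(S₁) + σ(S₂)σ(S₂)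 + σ(S₃)σ(S₃)).) -/

import Mathlib

open Matrix BigOperators

noncomputable section

abbrev M8 : Type := Matrix (Fin 8) (Fin 8) ℝ

/-- 2-forms on ℝ⁷ -/
abbrev Lam2 : Type := AlternatingMap ℝ (Fin 7 → ℝ) ℝ (Fin 2)

/-- 3-forms on ℝ⁷ -/
abbrev Lam3 : Type := AlternatingMap ℝ (Fin 7 → ℝ) ℝ (Fin 3)

/-- standard basis of ℝ⁷ -/
def u (i : Fin 7) : Fin 7 → ℝ := Pi.single i 1

/-- standard spinor basis ψ₁,…,ψ₈ (0-indexed) -/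
def ψ (k : Fin 8) : Fin 8 → ℝ := Pi.single k 1

/-- E_{ij} : ψ_i ↦ ψ_j, ψ_j ↦ -ψ_i -/
def EE (i j : Fin 8) : M8 := Matrix.single j i 1 - Matrix.single i j 1

/-- Clifford multiplication by e₁,…,e₇ (0-indexed) -/
def e : Fin 7 → M8 :=
  ![EE 0 7 + EE 1 6 - EE 2 5 - EE 3 4,
    -EE 0 6 + EE 1 7 + EE 2 4 - EE 3 5,
    -EE 0 5 + EE 1 4 - EE 2 7 + EE 3 6,
    -EE 0 4 - EE 1 5 - EE 2 6 - EE 3 7,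
    -EE 0 2 - EE 1 3 + EE 4 6 + EE 5 7,
    EE 0 3 - EE 1 2 - EE 4 7 + EE 5 6,
    EE 0 1 - EE 2 3 - EE 4 5 + EE 6 7]

def pick2 (i j : Fin 7) : (Fin 7 → ℝ) →ₗ[ℝ] (Fin 2 → ℝ) :=
  LinearMap.pi fun m => LinearMap.proj (![i, j] m)

def pick3 (i j k : Fin 7) : (Fin 7 → ℝ) →ₗ[ℝ] (Fin 3 → ℝ) :=
  LinearMap.pi fun m => LinearMap.proj (![i, j, k] m)

/-- the 2-form e_i ∧ e_j -/
def w2 (i j : Fin 7) : Lam2 :=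
  (Matrix.detRowAlternating : AlternatingMap ℝ (Fin 2 → ℝ) ℝ (Fin 2)).compLinearMap (pick2 i j)

/-- the 3-form e_i ∧ e_j ∧ e_k -/
def w3 (i j k : Fin 7) : Lam3 :=
  (Matrix.detRowAlternating : AlternatingMap ℝ (Fin 3 → ℝ) ℝ (Fin 3)).compLinearMap (pick3 i j k)

/-- Clifford action of a 2-form -/
def σ2 (ω : Lam2) : M8 :=
  ∑ i : Fin 7, ∑ j : Fin 7, if i < j then ω ![u i, u j] • (e i * e j) else 0

/-- Clifford action of a 3-form -/
def σ3 (T : Lam3) : M8 :=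
  ∑ i : Fin 7, ∑ j : Fin 7, ∑ k : Fin 7,
    if i < j ∧ j < k then T ![u i, u j, u k] • (e i * e j * e k) else 0

/-- the skew-symmetric 7×7 matrix A_ω associated to a 2-form ω -/
def A2 (ω : Lam2) : Matrix (Fin 7) (Fin 7) ℝ :=
  ∑ i : Fin 7, ∑ j : Fin 7,
    if i < j then ω ![u i, u j] •
      (Matrix.single j i (1 : ℝ) - Matrix.single i j 1) else 0

/-- T is ω-invariant: the natural action of the 2-form ω on the 3-form T vanishes -/
def inv3 (ω : Lam2) (T : Lam3) : Prop :=
  ∀ X Y Z : Fin 7 → ℝ,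
    T ![A2 ω *ᵥ X, Y, Z] + T ![X, A2 ω *ᵥ Y, Z] + T ![X, Y, A2 ω *ᵥ Z] = 0

/-- the standard G₂ 3-form φ = e₁₂₇+e₁₃₅−e₁₄₆−e₂₃₆−e₂₄₅+e₃₄₇+e₅₆₇ -/
def φf : Lam3 :=
  w3 0 1 6 + w3 0 2 4 - w3 0 3 5 - w3 1 2 5 - w3 1 3 4 + w3 2 3 6 + w3 4 5 6

def S1f : Lam2 := w2 0 1 - w2 4 5
def S2f : Lam2 := w2 0 2 + w2 1 3 + w2 2 4 + w2 3 5
def S3f : Lam2 := w2 0 3 - w2 1 2 + w2 2 5 - w2 3 4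

def Af : Lam3 :=
  -(2:ℝ) • w3 0 1 2 + w3 0 2 5 - w3 0 3 4 + w3 1 2 4 + w3 1 3 5 + (2:ℝ) • w3 2 4 5
def Bf : Lam3 :=
  -(2:ℝ) • w3 0 1 3 - w3 0 2 4 - w3 0 3 5 + w3 1 2 5 - w3 1 3 4 + (2:ℝ) • w3 3 4 5
def Cf : Lam3 :=
  (4:ℝ) • w3 0 1 6 - (3:ℝ) • w3 0 2 4 + (3:ℝ) • w3 0 3 5 + (3:ℝ) • w3 1 2 5
    + (3:ℝ) • w3 1 3 4 + (4:ℝ) • w3 2 3 6 + (4:ℝ) • w3 4 5 6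

lemma if_sub (A : Prop) [Decidable A] (x y : ℝ) :
    (if A then x - y else 0) = (if A then x else 0) - (if A then y else 0) := by
  split_ifs <;> simp

lemma if_nest (A B : Prop) [Decidable A] [Decidable B] (x : ℝ) :
    (if A then (if B then x else 0) else 0) = (if A then (1:ℝ) else 0) * (if B then x else 0) := by
  split_ifs <;> simp

lemma if_mul (A : Prop) [Decidable A] (x y : ℝ) :
    (if A then x * y else 0) = (if A then (1:ℝ) else 0) * x * y := by
  split_ifs <;> simp

set_option maxHeartbeats 1000000 in
set_option maxRecDepth 4000 in
lemma w3_val (p q r i j k : Fin 7) : w3 p q r ![u i, u j, u k] =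
    (if p = i then (1:ℝ) else 0) * ((if q = j then (1:ℝ) else 0) * (if r = k then 1 else 0)
        - (if r = j then (1:ℝ) else 0) * (if q = k then 1 else 0))
    - (if p = j then (1:ℝ) else 0) * ((if q = i then (1:ℝ) else 0) * (if r = k then 1 else 0)
        - (if r = i then (1:ℝ) else 0) * (if q = k then 1 else 0))
    + (if p = k then (1:ℝ) else 0) * ((if q = i then (1:ℝ) else 0) * (if r = j then 1 else 0)
        - (if r = i then (1:ℝ) else 0) * (if q = j then 1 else 0)) := by
  have h : w3 p q r ![u i, u j, u k]
      = Matrix.det (Matrix.of fun m s => (![u i, u j, u k] m) (![p, q, r] s)) := rfl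
  rw [h, Matrix.det_fin_three]
  simp [u, Pi.single_apply]
  simp only [if_sub, if_nest, if_mul]
  simp only [eq_comm (a := p), eq_comm (a := q), eq_comm (a := r)]
  ring

lemma w2_val (p q i j : Fin 7) : w2 p q ![u i, u j] =
    (if p = i then (1:ℝ) else 0) * (if q = j then 1 else 0)
      - (if q = i then (1:ℝ) else 0) * (if p = j then 1 else 0) := by
  have h : w2 p q ![u i, u j]
      = Matrix.det (Matrix.of fun r s => (![u i, u j] r) (![p, q] s)) := rfl
  rw [h, Matrix.det_fin_two]
  simp [u, Pi.single_apply]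
  split_ifs <;> grind

set_option maxHeartbeats 2000000 in
lemma hS1 : σ2 S1f = e 0 * e 1 - e 4 * e 5 := by
  simp (config := { decide := true }) only [σ2, S1f, AlternatingMap.sub_apply, w2_val,
    Fin.sum_univ_seven, if_true, if_false, ite_true, ite_false]
  norm_num
  try abel

set_option maxHeartbeats 2000000 in
lemma hS2 : σ2 S2f = e 0 * e 2 + e 1 * e 3 + e 2 * e 4 + e 3 * e 5 := by
  simp (config := { decide := true }) only [σ2, S2f, AlternatingMap.add_apply, w2_val,
    Fin.sum_univ_seven, if_true, if_false, ite_true, ite_false]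
  norm_num
  try abel

set_option maxHeartbeats 2000000 in
lemma hS3 : σ2 S3f = e 0 * e 3 - e 1 * e 2 + e 2 * e 5 - e 3 * e 4 := by
  simp (config := { decide := true }) only [σ2, S3f, AlternatingMap.add_apply,
    AlternatingMap.sub_apply, w2_val, Fin.sum_univ_seven, if_true, if_false, ite_true, ite_false]
  norm_num
  try abel

set_option maxHeartbeats 4000000 in
lemma hT (a b c d : ℝ) : σ3 (d • φf + a • Af + b • Bf + c • Cf) =
    (-(2:ℝ)*a) • (e 0*e 1*e 2) + (-(2:ℝ)*b) • (e 0*e 1*e 3) + (d+4*c) • (e 0*e 1*e 6)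
    + (d-b-3*c) • (e 0*e 2*e 4) + a • (e 0*e 2*e 5) + (-a) • (e 0*e 3*e 4)
    + (-d-b+3*c) • (e 0*e 3*e 5) + a • (e 1*e 2*e 4) + (-d+b+3*c) • (e 1*e 2*e 5)
    + (-d-b+3*c) • (e 1*e 3*e 4) + a • (e 1*e 3*e 5) + (d+4*c) • (e 2*e 3*e 6)
    + (2*a) • (e 2*e 4*e 5) + (2*b) • (e 3*e 4*e 5) + (d+4*c) • (e 4*e 5*e 6) := by
  simp (config := { decide := true }) only [σ3, φf, Af, Bf, Cf,
    AlternatingMap.add_apply, AlternatingMap.sub_apply, AlternatingMap.smul_apply,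
    smul_eq_mul, w3_val, Fin.sum_univ_seven, if_true, if_false, ite_true, ite_false]
  norm_num
  module

abbrev MZ8 : Type := Matrix (Fin 8) (Fin 8) ℤ

def EEz (i j : Fin 8) : MZ8 := Matrix.single j i 1 - Matrix.single i j 1

def eZ : Fin 7 → MZ8 :=
  ![EEz 0 7 + EEz 1 6 - EEz 2 5 - EEz 3 4,
    -EEz 0 6 + EEz 1 7 + EEz 2 4 - EEz 3 5,
    -EEz 0 5 + EEz 1 4 - EEz 2 7 + EEz 3 6,
    -EEz 0 4 - EEz 1 5 - EEz 2 6 - EEz 3 7,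
    -EEz 0 2 - EEz 1 3 + EEz 4 6 + EEz 5 7,
    EEz 0 3 - EEz 1 2 - EEz 4 7 + EEz 5 6,
    EEz 0 1 - EEz 2 3 - EEz 4 5 + EEz 6 7]

def mm : MZ8 →+* M8 := (Int.castRingHom ℝ).mapMatrix
def TAz : MZ8 := !![0, 0, 0, 0, 0, 0, 0, 0;
  0, 0, 0, 0, 0, 0, 0, 0;
  0, 0, 0, 0, 0, 0, -4, 0;
  0, 0, 0, 0, 0, 0, 0, -4;
  0, 0, 0, 0, 0, 4, 0, 0;
  0, 0, 0, 0, 4, 0, 0, 0;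
  0, 0, -4, 0, 0, 0, 0, 0;
  0, 0, 0, -4, 0, 0, 0, 0]
def TBz : MZ8 := !![0, 0, 0, 0, 0, 0, 0, 0;
  0, 0, 0, 0, 0, 0, 0, 0;
  0, 0, 0, 0, 0, 0, 0, 4;
  0, 0, 0, 0, 0, 0, -4, 0;
  0, 0, 0, 0, -4, 0, 0, 0;
  0, 0, 0, 0, 0, 4, 0, 0;
  0, 0, 0, -4, 0, 0, 0, 0;
  0, 0, 4, 0, 0, 0, 0, 0]
def TCz : MZ8 := !![0, 0, 0, 0, 0, 0, 0, 0;
  0, -24, 0, 0, 0, 0, 0, 0;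
  0, 0, 4, 0, 0, 0, 0, 0;
  0, 0, 0, 4, 0, 0, 0, 0;
  0, 0, 0, 0, 4, 0, 0, 0;
  0, 0, 0, 0, 0, 4, 0, 0;
  0, 0, 0, 0, 0, 0, 4, 0;
  0, 0, 0, 0, 0, 0, 0, 4]
def TDz : MZ8 := !![-7, 0, 0, 0, 0, 0, 0, 0;
  0, 1, 0, 0, 0, 0, 0, 0;
  0, 0, 1, 0, 0, 0, 0, 0;
  0, 0, 0, 1, 0, 0, 0, 0;
  0, 0, 0, 0, 1, 0, 0, 0;
  0, 0, 0, 0, 0, 1, 0, 0;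
  0, 0, 0, 0, 0, 0, 1, 0;
  0, 0, 0, 0, 0, 0, 0, 1]
def E00z : MZ8 := !![1, 0, 0, 0, 0, 0, 0, 0;
  0, 0, 0, 0, 0, 0, 0, 0;
  0, 0, 0, 0, 0, 0, 0, 0;
  0, 0, 0, 0, 0, 0, 0, 0;
  0, 0, 0, 0, 0, 0, 0, 0;
  0, 0, 0, 0, 0, 0, 0, 0;
  0, 0, 0, 0, 0, 0, 0, 0;
  0, 0, 0, 0, 0, 0, 0, 0]
def E11z : MZ8 := !![0, 0, 0, 0, 0, 0, 0, 0;
  0, 1, 0, 0, 0, 0, 0, 0;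
  0, 0, 0, 0, 0, 0, 0, 0;
  0, 0, 0, 0, 0, 0, 0, 0;
  0, 0, 0, 0, 0, 0, 0, 0;
  0, 0, 0, 0, 0, 0, 0, 0;
  0, 0, 0, 0, 0, 0, 0, 0;
  0, 0, 0, 0, 0, 0, 0, 0]
def DRz : MZ8 := !![0, 0, 0, 0, 0, 0, 0, 0;
  0, 0, 0, 0, 0, 0, 0, 0;
  0, 0, 1, 0, 0, 0, 0, 0;
  0, 0, 0, 1, 0, 0, 0, 0;
  0, 0, 0, 0, 1, 0, 0, 0;
  0, 0, 0, 0, 0, 1, 0, 0;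
  0, 0, 0, 0, 0, 0, 1, 0;
  0, 0, 0, 0, 0, 0, 0, 1]
def NAz : MZ8 := !![0, 0, 0, 0, 0, 0, 0, 0;
  0, 0, 0, 0, 0, 0, 0, 0;
  0, 0, 0, 0, 0, 0, -1, 0;
  0, 0, 0, 0, 0, 0, 0, -1;
  0, 0, 0, 0, 0, 1, 0, 0;
  0, 0, 0, 0, 1, 0, 0, 0;
  0, 0, -1, 0, 0, 0, 0, 0;
  0, 0, 0, -1, 0, 0, 0, 0]
def NBz : MZ8 := !![0, 0, 0, 0, 0, 0, 0, 0;
  0, 0, 0, 0, 0, 0, 0, 0;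
  0, 0, 0, 0, 0, 0, 0, 1;
  0, 0, 0, 0, 0, 0, -1, 0;
  0, 0, 0, 0, -1, 0, 0, 0;
  0, 0, 0, 0, 0, 1, 0, 0;
  0, 0, 0, -1, 0, 0, 0, 0;
  0, 0, 1, 0, 0, 0, 0, 0]


def S1z : MZ8 := eZ 0 * eZ 1 - eZ 4 * eZ 5
def S2z : MZ8 := eZ 0 * eZ 2 + eZ 1 * eZ 3 + eZ 2 * eZ 4 + eZ 3 * eZ 5
def S3z : MZ8 := eZ 0 * eZ 3 - eZ 1 * eZ 2 + eZ 2 * eZ 5 - eZ 3 * eZ 4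

lemma mm_zsmul (n : ℤ) (X : MZ8) : mm (n • X) = (n : ℝ) • mm X := by
  rw [map_zsmul, ← Int.cast_smul_eq_zsmul ℝ]

lemma mm_std (i j : Fin 8) (a : ℤ) :
    mm (Matrix.single i j a) = Matrix.single i j (a : ℝ) := by
  ext r s
  simp only [mm, RingHom.mapMatrix_apply, Matrix.map_apply, Matrix.single,
    Matrix.of_apply]
  split_ifs <;> simp

lemma hEE (i j : Fin 8) : EE i j = mm (EEz i j) := by
  simp [EE, EEz, map_sub, mm_std]

lemma he0 : e 0 = mm (eZ 0) := by
  rw [show e 0 = EE 0 7 + EE 1 6 - EE 2 5 - EE 3 4 from rfl, show eZ 0 = EEz 0 7 + EEz 1 6 - EEz 2 5 - EEz 3 4 from rfl]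
  simp [hEE, map_add, map_sub, map_neg]

lemma he1 : e 1 = mm (eZ 1) := by
  rw [show e 1 = -EE 0 6 + EE 1 7 + EE 2 4 - EE 3 5 from rfl, show eZ 1 = -EEz 0 6 + EEz 1 7 + EEz 2 4 - EEz 3 5 from rfl]
  simp [hEE, map_add, map_sub, map_neg]

lemma he2 : e 2 = mm (eZ 2) := by
  rw [show e 2 = -EE 0 5 + EE 1 4 - EE 2 7 + EE 3 6 from rfl, show eZ 2 = -EEz 0 5 + EEz 1 4 - EEz 2 7 + EEz 3 6 from rfl]
  simp [hEE, map_add, map_sub, map_neg]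

lemma he3 : e 3 = mm (eZ 3) := by
  rw [show e 3 = -EE 0 4 - EE 1 5 - EE 2 6 - EE 3 7 from rfl, show eZ 3 = -EEz 0 4 - EEz 1 5 - EEz 2 6 - EEz 3 7 from rfl]
  simp [hEE, map_add, map_sub, map_neg]

lemma he4 : e 4 = mm (eZ 4) := by
  rw [show e 4 = -EE 0 2 - EE 1 3 + EE 4 6 + EE 5 7 from rfl, show eZ 4 = -EEz 0 2 - EEz 1 3 + EEz 4 6 + EEz 5 7 from rfl]
  simp [hEE, map_add, map_sub, map_neg]

lemma he5 : e 5 = mm (eZ 5) := by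
  rw [show e 5 = EE 0 3 - EE 1 2 - EE 4 7 + EE 5 6 from rfl, show eZ 5 = EEz 0 3 - EEz 1 2 - EEz 4 7 + EEz 5 6 from rfl]
  simp [hEE, map_add, map_sub, map_neg]

lemma he6 : e 6 = mm (eZ 6) := by
  rw [show e 6 = EE 0 1 - EE 2 3 - EE 4 5 + EE 6 7 from rfl, show eZ 6 = EEz 0 1 - EEz 2 3 - EEz 4 5 + EEz 6 7 from rfl]
  simp [hEE, map_add, map_sub, map_neg]

lemma hTA' : mm TAz = (-(2:ℝ)) • (e 0*e 1*e 2) + e 0*e 2*e 5 - e 0*e 3*e 4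
    + e 1*e 2*e 4 + e 1*e 3*e 5 + (2:ℝ) • (e 2*e 4*e 5) := by
  rw [show TAz = (-2 : ℤ) • (eZ 0*eZ 1*eZ 2) + eZ 0*eZ 2*eZ 5 - eZ 0*eZ 3*eZ 4
    + eZ 1*eZ 2*eZ 4 + eZ 1*eZ 3*eZ 5 + (2:ℤ) • (eZ 2*eZ 4*eZ 5) from by decide]
  simp only [map_add, map_sub, _root_.map_mul, mm_zsmul, ← he0, ← he1, ← he2, ← he3, ← he4, ← he5, ← he6]
  norm_num

lemma hTB' : mm TBz = (-(2:ℝ)) • (e 0*e 1*e 3) - e 0*e 2*e 4 - e 0*e 3*e 5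
    + e 1*e 2*e 5 - e 1*e 3*e 4 + (2:ℝ) • (e 3*e 4*e 5) := by
  rw [show TBz = (-2 : ℤ) • (eZ 0*eZ 1*eZ 3) - eZ 0*eZ 2*eZ 4 - eZ 0*eZ 3*eZ 5
    + eZ 1*eZ 2*eZ 5 - eZ 1*eZ 3*eZ 4 + (2:ℤ) • (eZ 3*eZ 4*eZ 5) from by decide]
  simp only [map_add, map_sub, _root_.map_mul, mm_zsmul, ← he0, ← he1, ← he2, ← he3, ← he4, ← he5, ← he6]
  norm_num

lemma hTC' : mm TCz = (4:ℝ) • (e 0*e 1*e 6) - (3:ℝ) • (e 0*e 2*e 4) + (3:ℝ) • (e 0*e 3*e 5)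
    + (3:ℝ) • (e 1*e 2*e 5) + (3:ℝ) • (e 1*e 3*e 4) + (4:ℝ) • (e 2*e 3*e 6)
    + (4:ℝ) • (e 4*e 5*e 6) := by
  rw [show TCz = (4 : ℤ) • (eZ 0*eZ 1*eZ 6) - (3:ℤ) • (eZ 0*eZ 2*eZ 4)
    + (3:ℤ) • (eZ 0*eZ 3*eZ 5) + (3:ℤ) • (eZ 1*eZ 2*eZ 5) + (3:ℤ) • (eZ 1*eZ 3*eZ 4)
    + (4:ℤ) • (eZ 2*eZ 3*eZ 6) + (4:ℤ) • (eZ 4*eZ 5*eZ 6) from by decide]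
  simp only [map_add, map_sub, _root_.map_mul, mm_zsmul, ← he0, ← he1, ← he2, ← he3, ← he4, ← he5, ← he6]
  norm_num

lemma hTD' : mm TDz = e 0*e 1*e 6 + e 0*e 2*e 4 - e 0*e 3*e 5 - e 1*e 2*e 5
    - e 1*e 3*e 4 + e 2*e 3*e 6 + e 4*e 5*e 6 := by
  rw [show TDz = eZ 0*eZ 1*eZ 6 + eZ 0*eZ 2*eZ 4 - eZ 0*eZ 3*eZ 5 - eZ 1*eZ 2*eZ 5
    - eZ 1*eZ 3*eZ 4 + eZ 2*eZ 3*eZ 6 + eZ 4*eZ 5*eZ 6 from by decide]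
  simp only [map_add, map_sub, _root_.map_mul, ← he0, ← he1, ← he2, ← he3, ← he4, ← he5, ← he6]

lemma hT2 (a b c d : ℝ) : σ3 (d • φf + a • Af + b • Bf + c • Cf)
    = a • mm TAz + b • mm TBz + c • mm TCz + d • mm TDz := by
  rw [hT, hTA', hTB', hTC', hTD']
  module

lemma hRe : (2:ℝ) • σ2 S1f ^ 2 + σ2 S2f ^ 2 + σ2 S3f ^ 2 = (-16 : ℝ) • mm DRz := by
  have h1 : σ2 S1f = mm S1z := by rw [hS1]; simp only [S1z, map_sub, _root_.map_mul, ← he0, ← he1, ← he2, ← he3, ← he4, ← he5, ← he6]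
  have h2 : σ2 S2f = mm S2z := by rw [hS2]; simp only [S2z, map_add, _root_.map_mul, ← he0, ← he1, ← he2, ← he3, ← he4, ← he5, ← he6]
  have h3 : σ2 S3f = mm S3z := by rw [hS3]; simp only [S3z, map_add, map_sub, _root_.map_mul, ← he0, ← he1, ← he2, ← he3, ← he4, ← he5, ← he6]
  rw [h1, h2, h3]
  have hz : (2:ℤ) • (S1z * S1z) + S2z * S2z + S3z * S3z = (-16 : ℤ) • DRz := by decide
  calc (2:ℝ) • mm S1z ^ 2 + mm S2z ^ 2 + mm S3z ^ 2
      = mm ((2:ℤ) • (S1z * S1z) + S2z * S2z + S3z * S3z) := by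
        simp only [map_add, _root_.map_mul, mm_zsmul, pow_two]
        norm_num
    _ = (-16 : ℝ) • mm DRz := by rw [hz, mm_zsmul]; norm_num

lemma sq_expand (a b c d : ℝ) (A B C D : M8) :
    (a•A + b•B + c•C + d•D) * (a•A + b•B + c•C + d•D)
      = (a*a)•(A*A) + (b*b)•(B*B) + (c*c)•(C*C) + (d*d)•(D*D)
        + (a*b)•(A*B + B*A) + (a*c)•(A*C + C*A) + (a*d)•(A*D + D*A)
        + (b*c)•(B*C + C*B) + (b*d)•(B*D + D*B) + (c*d)•(C*D + D*C) := by
  simp only [add_mul, mul_add, smul_add, smul_smul, mul_smul_comm, smul_mul_assoc]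
  module

lemma hprod (X Y : MZ8) (Z : MZ8) (n : ℤ) (h : X * Y = n • Z) :
    mm X * mm Y = (n : ℝ) • mm Z := by
  rw [← _root_.map_mul, h, mm_zsmul]

set_option maxHeartbeats 1000000 in
lemma master (a b c d x : ℝ) :
    σ3 (d • φf + a • Af + b • Bf + c • Cf) ^ 2
      + x • ((2:ℝ) • σ2 S1f ^ 2 + σ2 S2f ^ 2 + σ2 S3f ^ 2)
    = (49*d^2) • mm E00z + (d^2 - 48*c*d + 576*c^2) • mm E11z
      + (-16*x + d^2 + 8*c*d + 16*c^2 + 16*a^2 + 16*b^2) • mm DRz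
      + (8*(a*d + 4*a*c)) • mm NAz + (8*(b*d + 4*b*c)) • mm NBz := by
  rw [pow_two, hT2, hRe, sq_expand]
  rw [hprod TAz TAz DRz 16 (by decide), hprod TBz TBz DRz 16 (by decide)]
  have hAB : mm TAz * mm TBz + mm TBz * mm TAz = (0:ℝ) • mm DRz := by
    rw [← _root_.map_mul, ← _root_.map_mul, ← map_add,
      show TAz*TBz + TBz*TAz = (0:ℤ) • DRz from by decide, mm_zsmul]
    norm_num
  have hCC : mm TCz * mm TCz = (576:ℝ) • mm E11z + (16:ℝ) • mm DRz := by
    rw [← _root_.map_mul, show TCz*TCz = (576:ℤ) • E11z + (16:ℤ) • DRz from by decide,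
      map_add, mm_zsmul, mm_zsmul]
    norm_num
  have hDD : mm TDz * mm TDz = (49:ℝ) • mm E00z + mm E11z + mm DRz := by
    rw [← _root_.map_mul, show TDz*TDz = (49:ℤ) • E00z + E11z + DRz from by decide,
      map_add, map_add, mm_zsmul]
    norm_num
  have hCD : mm TCz * mm TDz + mm TDz * mm TCz = (-48:ℝ) • mm E11z + (8:ℝ) • mm DRz := by
    rw [← _root_.map_mul, ← _root_.map_mul, ← map_add,
      show TCz*TDz + TDz*TCz = (-48:ℤ) • E11z + (8:ℤ) • DRz from by decide,
      map_add, mm_zsmul, mm_zsmul]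
    norm_num
  have hAC : mm TAz * mm TCz + mm TCz * mm TAz = (32:ℝ) • mm NAz := by
    rw [← _root_.map_mul, ← _root_.map_mul, ← map_add,
      show TAz*TCz + TCz*TAz = (32:ℤ) • NAz from by decide, mm_zsmul]
    norm_num
  have hAD : mm TAz * mm TDz + mm TDz * mm TAz = (8:ℝ) • mm NAz := by
    rw [← _root_.map_mul, ← _root_.map_mul, ← map_add,
      show TAz*TDz + TDz*TAz = (8:ℤ) • NAz from by decide, mm_zsmul]
    norm_num
  have hBC : mm TBz * mm TCz + mm TCz * mm TBz = (32:ℝ) • mm NBz := by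
    rw [← _root_.map_mul, ← _root_.map_mul, ← map_add,
      show TBz*TCz + TCz*TBz = (32:ℤ) • NBz from by decide, mm_zsmul]
    norm_num
  have hBD : mm TBz * mm TDz + mm TDz * mm TBz = (8:ℝ) • mm NBz := by
    rw [← _root_.map_mul, ← _root_.map_mul, ← map_add,
      show TBz*TDz + TDz*TBz = (8:ℤ) • NBz from by decide, mm_zsmul]
    norm_num
  rw [hAB, hCC, hDD, hCD, hAC, hAD, hBC, hBD]
  module

lemma hone : mm E00z + mm E11z + mm DRz = (1 : M8) := by
  rw [← map_add, ← map_add, show E00z + E11z + DRz = (1 : MZ8) from by decide, _root_.map_one]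


lemma entry_val (X : MZ8) (i j : Fin 8) : mm X i j = (X i j : ℝ) := rfl

/-- Bianchi identity for holonomy so(3):
σ(T)² + x(2σ(S₁)² + σ(S₂)² + σ(S₃)²) is scalar iff
(d = −4c ∧ x = a² + b² − 49c²) or (d = 3c ∧ a = 0 ∧ b = 0 ∧ 2x = −49c²). -/
theorem stmt_19 (a b c d x : ℝ) (hd : d = 3 * c ∨ d = -4 * c) :
    (∃ lam : ℝ,
        σ3 (d • φf + a • Af + b • Bf + c • Cf) ^ 2
          + x • ((2:ℝ) • σ2 S1f ^ 2 + σ2 S2f ^ 2 + σ2 S3f ^ 2)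
          = lam • (1 : M8))
      ↔ ((d = -4 * c ∧ x = a ^ 2 + b ^ 2 - 49 * c ^ 2) ∨
         (d = 3 * c ∧ a = 0 ∧ b = 0 ∧ 2 * x = -49 * c ^ 2)) := by
  
  rw [master]
  constructor
  · rintro ⟨lam, h⟩
    have h00 := congrFun (congrFun h 0) 0
    have h11 := congrFun (congrFun h 1) 1
    have h22 := congrFun (congrFun h 2) 2
    have h26 := congrFun (congrFun h 2) 6
    have h27 := congrFun (congrFun h 2) 7
    simp only [Matrix.add_apply, Matrix.smul_apply, Matrix.one_apply, entry_val, smul_eq_mul,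
      show E00z 0 0 = (1:ℤ) from by decide, show E00z 1 1 = (0:ℤ) from by decide,
      show E00z 2 2 = (0:ℤ) from by decide, show E00z 2 6 = (0:ℤ) from by decide,
      show E00z 2 7 = (0:ℤ) from by decide,
      show E11z 0 0 = (0:ℤ) from by decide, show E11z 1 1 = (1:ℤ) from by decide,
      show E11z 2 2 = (0:ℤ) from by decide, show E11z 2 6 = (0:ℤ) from by decide,
      show E11z 2 7 = (0:ℤ) from by decide,
      show DRz 0 0 = (0:ℤ) from by decide, show DRz 1 1 = (0:ℤ) from by decide,
      show DRz 2 2 = (1:ℤ) from by decide, show DRz 2 6 = (0:ℤ) from by decide,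
      show DRz 2 7 = (0:ℤ) from by decide,
      show NAz 0 0 = (0:ℤ) from by decide, show NAz 1 1 = (0:ℤ) from by decide,
      show NAz 2 2 = (0:ℤ) from by decide, show NAz 2 6 = (-1:ℤ) from by decide,
      show NAz 2 7 = (0:ℤ) from by decide,
      show NBz 0 0 = (0:ℤ) from by decide, show NBz 1 1 = (0:ℤ) from by decide,
      show NBz 2 2 = (0:ℤ) from by decide, show NBz 2 6 = (0:ℤ) from by decide,
      show NBz 2 7 = (1:ℤ) from by decide,
      Int.cast_one, Int.cast_zero, Int.cast_neg, mul_zero, mul_one, mul_neg, mul_neg_one,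
      add_zero, zero_add, neg_zero] at h00 h11 h22 h26 h27
    simp only [show ((2:Fin 8) = 6) = False from by decide,
      show ((2:Fin 8) = 7) = False from by decide, if_true, if_false,
      mul_one, mul_zero] at h00 h11 h22 h26 h27
    rcases hd with hd | hd
    · subst hd
      by_cases hc : c = 0
      · subst hc
        refine Or.inl ⟨by ring, ?_⟩
        linear_combination (h22 - h00) / (-16)
      · right
        have hac : a * c = 0 := by linear_combination h26 / (-56)
        have hbc : b * c = 0 := by linear_combination h27 / 56
        have ha : a = 0 := by
          rcases mul_eq_zero.mp hac with h' | h'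
          · exact h'
          · exact absurd h' hc
        have hb : b = 0 := by
          rcases mul_eq_zero.mp hbc with h' | h'
          · exact h'
          · exact absurd h' hc
        subst ha; subst hb
        exact ⟨rfl, rfl, rfl, by linear_combination (h22 - h00) / (-8)⟩
    · subst hd
      refine Or.inl ⟨rfl, ?_⟩
      linear_combination (h22 - h00) / (-16)
  · rintro (⟨hd', hx⟩ | ⟨hd', ha, hb, hx⟩)
    · subst hd'; subst hx
      refine ⟨784 * c ^ 2, ?_⟩
      rw [← hone]
      module
    · subst hd'; subst ha; subst hb
      have hx' : x = -49 * c ^ 2 / 2 := by linarith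
      subst hx'
      refine ⟨441 * c ^ 2, ?_⟩
      rw [← hone]
      module
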